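/- arXiv:1803.09758 — 6 statements merged into one kernel-verified Lean document; each statement's English description precedes it below -/
import Mathlib

section
/- Let n ≥ 1 and r ≥ 1 be natural numbers and let H be an r × n matrix over ZMod 2. Then the map p ↦ H·v_p (matrix-vector product of H with the consecutive tail vector v_p) is injective on {0, 1, …, n−1} if and only if for all p, q ∈ {0, 1, …, n−1} with p > q there exists a row index i ∈ {1, …, r} such that the sum over ZMod 2 of the entries of row i of H over the columns n−p+1 through n−q (1-indexed; equivalently, the 0-indexed columns j with n−p ≤ j ≤ n−q−1) equals 1. (This is Lemma 1, Statements 1 and 2 of the paper: the consecutive-Z error set E^z_{0,n} is distinguishable by a CSS code if and only if its X-stabilizer parity check matrix H = H_x satisfies this window condition, and symmetrically for E^x_{0,n} and H_z.) -/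
/-- The consecutive tail vector `v_p`: indicator of the last `p` coordinates. -/
def tailVec (n p : ℕ) : Fin n → ZMod 2 := fun j => if n - p ≤ j.val then 1 else 0

/-- Left cyclic shift by `l` of a vector `v : Fin n → ZMod 2`. -/
def shiftL {n : ℕ} (v : Fin n → ZMod 2) (l : ℕ) : Fin n → ZMod 2 :=
  fun j => v ⟨(j.val + l) % n, Nat.mod_lt _ j.pos⟩

/-- A code is cyclic if it is invariant under left cyclic shifts. -/
def IsCyclicCode {n : ℕ} (C : Submodule (ZMod 2) (Fin n → ZMod 2)) : Prop :=
  ∀ v ∈ C, ∀ l : ℕ, shiftL v l ∈ C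

/-- The dual code `C⊥` with respect to the standard bilinear form. -/
def dualCode {n : ℕ} (C : Submodule (ZMod 2) (Fin n → ZMod 2)) :
    Submodule (ZMod 2) (Fin n → ZMod 2) where
  carrier := {u | ∀ w ∈ C, ∑ j, u j * w j = 0}
  add_mem' := by
    intro a b ha hb w hw
    simp only [Set.mem_setOf_eq, Pi.add_apply, add_mul] at *
    rw [Finset.sum_add_distrib, ha w hw, hb w hw, add_zero]
  zero_mem' := by
    intro w hw
    simp
  smul_mem' := by
    intro c a ha w hw
    simp only [Set.mem_setOf_eq, Pi.smul_apply, smul_eq_mul, mul_assoc] at *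
    rw [← Finset.mul_sum, ha w hw, mul_zero]

theorem stmt0 (n r : ℕ) (hn : 1 ≤ n) (hr : 1 ≤ r)
    (H : Matrix (Fin r) (Fin n) (ZMod 2)) :
    Set.InjOn (fun p : ℕ => H.mulVec (tailVec n p)) (Set.Iio n) ↔
      ∀ p q : ℕ, p < n → q < n → p > q →
        ∃ i : Fin r,
          (∑ j : Fin n, if n - p ≤ j.val ∧ j.val < n - q then H i j else 0) = 1 := by
  have key : ∀ p q : ℕ, p < n → q < n → q < p → ∀ i : Fin r,
      H.mulVec (tailVec n p) i - H.mulVec (tailVec n q) i =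
        ∑ j : Fin n, if n - p ≤ j.val ∧ j.val < n - q then H i j else 0 := by
    intro p q hp hq hqp i
    simp only [Matrix.mulVec, dotProduct]
    rw [← Finset.sum_sub_distrib]
    refine Finset.sum_congr rfl fun j _ => ?_
    have hle : n - p ≤ n - q := Nat.sub_le_sub_left hqp.le n
    simp only [tailVec]
    by_cases h1 : n - p ≤ j.val
    · by_cases h2 : (j : ℕ) < n - q
      · rw [if_pos h1, if_neg (by omega), if_pos ⟨h1, h2⟩]; ring
      · rw [if_pos h1, if_pos (by omega), if_neg (by tauto)]; ring
    · rw [if_neg h1, if_neg (by omega), if_neg (by tauto)]; ring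
  constructor
  · intro hinj p q hp hq hqp
    have hne : H.mulVec (tailVec n p) ≠ H.mulVec (tailVec n q) := by
      intro h
      exact absurd (hinj (Set.mem_Iio.2 hp) (Set.mem_Iio.2 hq) h) (by omega)
    obtain ⟨i, hi⟩ := Function.ne_iff.1 hne
    refine ⟨i, ?_⟩
    have := key p q hp hq hqp i
    have hne' : H.mulVec (tailVec n p) i - H.mulVec (tailVec n q) i ≠ 0 :=
      fun h => hi (by rwa [sub_eq_zero] at h)
    rw [this] at hne'
    revert hne'
    generalize (∑ j : Fin n, if n - p ≤ j.val ∧ j.val < n - q then H i j else 0) = x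
    revert x; decide
  · intro hcond p hp q hq heq
    simp only [Set.mem_Iio] at hp hq
    by_contra hne
    rcases Nat.lt_or_ge q p with h | h
    · obtain ⟨i, hi⟩ := hcond p q hp hq h
      have := key p q hp hq h i
      rw [hi] at this
      have : H.mulVec (tailVec n p) i - H.mulVec (tailVec n q) i = 1 := this
      rw [show H.mulVec (tailVec n p) = H.mulVec (tailVec n q) from heq, sub_self] at this
      exact absurd this (by decide)
    · have h' : q > p := lt_of_le_of_ne h hne
      obtain ⟨i, hi⟩ := hcond q p hq hp h'
      have := key q p hq hp h' i
      rw [hi] at this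
      rw [show H.mulVec (tailVec n p) = H.mulVec (tailVec n q) from heq, sub_self] at this
      exact absurd this (by decide)
end

section
/- Let n ≥ 1, let C be a cyclic ZMod 2-submodule of (Fin n → ZMod 2), and let H be a parity check matrix of C, i.e., an r × n matrix over ZMod 2 whose kernel under e ↦ H·e equals C. Then for every l ∈ {0, 1, …, n−1}: the map p ↦ H·L(v_p, l) is injective on {0, 1, …, n−1} if and only if for every u ∈ {2, …, n} there exists a row index i such that the sum over ZMod 2 of the entries of row i of H over columns u through n (1-indexed; equivalently 0-indexed columns u−1 through n−1) equals 1. (This is Lemma 3, Statements 1 and 2 of the paper: for cyclic CSS codes, the distinguishability condition for the shifted consecutive error sets E^z_{l,n} and E^x_{l,n} simplifies to a condition on column tail sums.) -/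
lemma shiftL_add {n : ℕ} (a b : Fin n → ZMod 2) (l : ℕ) :
    shiftL (a + b) l = shiftL a l + shiftL b l := rfl

lemma shiftL_shiftL {n : ℕ} (v : Fin n → ZMod 2) (a b : ℕ) :
    shiftL (shiftL v a) b = shiftL v (b + a) := by
  funext j
  simp only [shiftL]
  congr 1
  exact Fin.ext (by simp [Nat.mod_add_mod, Nat.add_assoc])

lemma shiftL_n {n : ℕ} (v : Fin n → ZMod 2) : shiftL v n = v := by
  funext j
  simp only [shiftL]
  congr 1
  exact Fin.ext (by simp [Nat.add_mod_right, Nat.mod_eq_of_lt j.isLt])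

lemma mem_shift_iff {n : ℕ} {C : Submodule (ZMod 2) (Fin n → ZMod 2)} (hC : IsCyclicCode C)
    {l : ℕ} (hl : l ≤ n) (v : Fin n → ZMod 2) : shiftL v l ∈ C ↔ v ∈ C := by
  constructor
  · intro h
    have := hC _ h (n - l)
    rwa [shiftL_shiftL, Nat.sub_add_cancel hl, shiftL_n] at this
  · intro h; exact hC _ h l

lemma tailVec_zero {n : ℕ} : tailVec n 0 = 0 := by
  funext j
  simp only [tailVec, Nat.sub_zero, Pi.zero_apply]
  exact if_neg (by have := j.isLt; omega)

lemma tail_shift {n p q : ℕ} (hq : q < p) (hp : p < n) :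
    shiftL (tailVec n p + tailVec n q) (n - q) = tailVec n (p - q) := by
  funext j
  have hj := j.isLt
  simp only [shiftL, tailVec, Pi.add_apply]
  rcases lt_or_ge j.val q with h | h
  · simp only [Nat.mod_eq_of_lt (show j.val + (n - q) < n by omega)]
    split_ifs <;> first | rfl | (exfalso; omega) | decide
  · have h2 : j.val + (n - q) = (j.val - q) + n := by omega
    simp only [h2, Nat.add_mod_right, Nat.mod_eq_of_lt (show j.val - q < n by omega)]
    split_ifs <;> first | rfl | (exfalso; omega) | decide

theorem stmt3 (n r : ℕ) (hn : 1 ≤ n) (C : Submodule (ZMod 2) (Fin n → ZMod 2))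
    (hC : IsCyclicCode C) (H : Matrix (Fin r) (Fin n) (ZMod 2))
    (hH : ∀ e : Fin n → ZMod 2, H.mulVec e = 0 ↔ e ∈ C) :
    ∀ l < n,
      (Set.InjOn (fun p : ℕ => H.mulVec (shiftL (tailVec n p) l)) (Set.Iio n) ↔
        ∀ u : ℕ, 2 ≤ u → u ≤ n →
          ∃ i : Fin r, (∑ j : Fin n, if u - 1 ≤ j.val then H i j else 0) = 1) := by
  intro l hl
  -- the sum in the statement is a component of H.mulVec of a tail vector
  have hsum : ∀ (u : ℕ) (i : Fin r), u ≤ n → 1 ≤ u →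
      (∑ j : Fin n, if u - 1 ≤ j.val then H i j else 0) = H.mulVec (tailVec n (n - u + 1)) i := by
    intro u i hun hu1
    simp only [Matrix.mulVec, dotProduct, tailVec, mul_ite, mul_one, mul_zero]
    apply Finset.sum_congr rfl
    intro j _
    congr 1
    have : n - (n - u + 1) = u - 1 := by omega
    rw [this]
  have hne : ∀ x : ZMod 2, x ≠ 0 ↔ x = 1 := by decide
  constructor
  · -- injectivity → tail condition
    intro hinj u hu2 hun
    by_contra hcon
    push_neg at hcon
    set p := n - u + 1 with hp
    have hmem : tailVec n p ∈ C := by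
      rw [← hH]
      funext i
      have := hcon i
      rw [hsum u i hun (by omega)] at this
      have h2 : ∀ x : ZMod 2, x ≠ 1 → x = 0 := by decide
      exact h2 _ this
    have h0 : H.mulVec (shiftL (tailVec n p) l) = H.mulVec (shiftL (tailVec n 0) l) := by
      rw [tailVec_zero]
      have : shiftL (0 : Fin n → ZMod 2) l = 0 := rfl
      rw [this, Matrix.mulVec_zero, hH]
      exact hC _ hmem l
    have := hinj (show p ∈ Set.Iio n by simp [hp]; omega)
      (show 0 ∈ Set.Iio n by simp; omega) h0
    omega
  · -- tail condition → injectivity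
    intro htail
    -- key claim: no two distinct tails collide
    have key : ∀ p q : ℕ, q < p → p < n →
        H.mulVec (shiftL (tailVec n p) l) ≠ H.mulVec (shiftL (tailVec n q) l) := by
      intro p q hqp hpn heq
      have hsub : H.mulVec (shiftL (tailVec n p) l + shiftL (tailVec n q) l) = 0 := by
        rw [Matrix.mulVec_add, heq]
        funext i
        simp only [Pi.add_apply, Pi.zero_apply]
        exact CharTwo.add_self_eq_zero _
      rw [← shiftL_add, hH, mem_shift_iff hC (le_of_lt hl)] at hsub
      have hmem : tailVec n (p - q) ∈ C := by
        rw [← tail_shift hqp hpn]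
        exact hC _ hsub (n - q)
      rw [← hH] at hmem
      obtain ⟨i, hi⟩ := htail (n - (p - q) + 1) (by omega) (by omega)
      rw [hsum _ i (by omega) (by omega)] at hi
      have hpq : n - (n - (p - q) + 1) + 1 = p - q := by omega
      rw [hpq, hmem] at hi
      simp only [Pi.zero_apply] at hi
      exact absurd hi (by decide)
    intro p hp q hq hfeq
    simp only [Set.mem_Iio] at hp hq
    rcases lt_trichotomy p q with h | h | h
    · exact absurd hfeq.symm (key q p h hq)
    · exact h
    · exact absurd hfeq (key p q h hp)
end

section
/- Let n ≥ 1 and let C_x and C_z be cyclic ZMod 2-submodules of (Fin n → ZMod 2) such that C_x⊥ ⊆ C_z, and suppose both C_x and C_z have minimum distance at least 3 (every nonzero codeword has Hamming weight at least 3). Then for every l ∈ {0, 1, …, n−1}, the consecutive error product set at shift l is distinguishable: for all p₁, p₂, q₁, q₂ ∈ {0, 1, …, n−1} with (p₁, q₁) ≠ (p₂, q₂), it is not the case that both L(v_{p₁}, l) + L(v_{p₂}, l) ∈ C_z and L(v_{q₁}, l) + L(v_{q₂}, l) ∈ C_x. (This is the main theorem of the paper: two elements of the consecutive error product set E^P_{l,n},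 with X-parts indexed by p detected modulo C_z and Z-parts indexed by q detected modulo C_x, always have distinct syndromes with respect to the CSS code built from C_x and C_z.) -/
open Fin.NatCast in
lemma shiftL_eq {n : ℕ} [NeZero n] (v : Fin n → ZMod 2) (l : ℕ) :
    shiftL v l = fun j => v (j + (l : Fin n)) := by
  funext j
  exact congrArg v (Fin.ext (by simp [Fin.add_def, Fin.val_natCast, Nat.add_mod_mod]))

open Fin.NatCast in
lemma hammingNorm_shiftL {n : ℕ} [NeZero n] (v : Fin n → ZMod 2) (l : ℕ) :
    hammingNorm (shiftL v l) = hammingNorm v := by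
  rw [shiftL_eq]
  unfold hammingNorm
  exact Finset.card_equiv (Equiv.addRight (l : Fin n)) (by simp)

lemma gcalc (n p q : ℕ) (hp : p < n) (hq : q < n) (hpq : p ≠ q) (k : ℕ) (hk : k < n) :
    ((if n - p ≤ k then (1 : ZMod 2) else 0) + (if n - q ≤ k then 1 else 0)) +
      ((if n - p ≤ (k + 1) % n then (1 : ZMod 2) else 0) +
        (if n - q ≤ (k + 1) % n then 1 else 0)) =
    if k = n - p - 1 ∨ k = n - q - 1 then 1 else 0 := by
  rcases eq_or_lt_of_le (Nat.succ_le_of_lt hk) with h | h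
  · rw [← h, Nat.mod_self]
    split_ifs <;> first | decide | omega
  · rw [Nat.mod_eq_of_lt h]
    split_ifs <;> first | decide | omega

lemma notMem (n : ℕ) (hn : 1 ≤ n) (C : Submodule (ZMod 2) (Fin n → ZMod 2))
    (hC : IsCyclicCode C) (hd : ∀ w ∈ C, w ≠ 0 → 3 ≤ hammingNorm w)
    (l p q : ℕ) (hp : p < n) (hq : q < n) (hpq : p ≠ q) :
    shiftL (tailVec n p) l + shiftL (tailVec n q) l ∉ C := by
  haveI : NeZero n := ⟨by omega⟩
  intro hw
  set w := shiftL (tailVec n p) l + shiftL (tailVec n q) l with hwdef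
  have hu : w + shiftL w 1 ∈ C := C.add_mem hw (hC w hw 1)
  set g : Fin n → ZMod 2 := fun j => if j.val = n - p - 1 ∨ j.val = n - q - 1 then 1 else 0
    with hgdef
  have hgu : w + shiftL w 1 = shiftL g l := by
    funext j
    have hmod : ((j.val + 1) % n + l) % n = ((j.val + l) % n + 1) % n := by
      rw [Nat.mod_add_mod, Nat.mod_add_mod]
      congr 1
      omega
    simp only [hwdef, hgdef, Pi.add_apply, shiftL, tailVec, hmod]
    exact gcalc n p q hp hq hpq ((j.val + l) % n) (Nat.mod_lt _ (by omega))
  have hab : (⟨n - p - 1, by omega⟩ : Fin n) ≠ ⟨n - q - 1, by omega⟩ := by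
    simp only [ne_eq, Fin.mk.injEq]
    omega
  have hg2 : hammingNorm g = 2 := by
    unfold hammingNorm
    rw [show ({i | g i ≠ 0} : Finset (Fin n)) =
        {(⟨n - p - 1, by omega⟩ : Fin n), ⟨n - q - 1, by omega⟩} from ?_]
    · rw [Finset.card_insert_of_notMem (by simp [hab]), Finset.card_singleton]
    · ext i
      simp [hgdef, Fin.ext_iff]
      tauto
  have hgne : shiftL g l ≠ 0 := by
    rw [← hammingNorm_ne_zero_iff, hammingNorm_shiftL, hg2]
    omega
  have h3 := hd _ hu (by rw [hgu]; exact hgne)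
  rw [hgu, hammingNorm_shiftL, hg2] at h3
  omega

theorem stmt5 (n : ℕ) (hn : 1 ≤ n)
    (Cx Cz : Submodule (ZMod 2) (Fin n → ZMod 2))
    (hCx : IsCyclicCode Cx) (hCz : IsCyclicCode Cz)
    (hsub : dualCode Cx ≤ Cz)
    (hdx : ∀ w ∈ Cx, w ≠ 0 → 3 ≤ hammingNorm w)
    (hdz : ∀ w ∈ Cz, w ≠ 0 → 3 ≤ hammingNorm w) :
    ∀ l < n, ∀ p₁ p₂ q₁ q₂ : ℕ, p₁ < n → p₂ < n → q₁ < n → q₂ < n →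
      (p₁, q₁) ≠ (p₂, q₂) →
      ¬(shiftL (tailVec n p₁) l + shiftL (tailVec n p₂) l ∈ Cz ∧
        shiftL (tailVec n q₁) l + shiftL (tailVec n q₂) l ∈ Cx) := by
  intro l hl p₁ p₂ q₁ q₂ hp1 hp2 hq1 hq2 hne ⟨hz, hx⟩
  by_cases hp : p₁ = p₂
  · have hq : q₁ ≠ q₂ := fun h => hne (by rw [hp, h])
    exact notMem n hn Cx hCx hdx l q₁ q₂ hq1 hq2 hq hx
  · exact notMem n hn Cz hCz hdz l p₁ p₂ hp1 hp2 hp hz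
end

section
/- Let n ≥ 2 and let C be a cyclic ZMod 2-submodule of (Fin n → ZMod 2). Suppose C contains the indicator vector of a set of m cyclically consecutive coordinates for some m with 1 ≤ m ≤ n−1 (i.e., some left cyclic shift of the consecutive tail vector v_m belongs to C). Then C contains a codeword of Hamming weight exactly 2; in particular, the minimum distance of C is at most 2. (This is the key intermediate step in the proof of the paper's main theorem: adding a consecutive-block codeword to its shift by one produces a weight-2 codeword, contradicting distance at least 3.) -/
open Fin.NatCast in
lemma norm_shiftL {n : ℕ} (hn : 0 < n) (v : Fin n → ZMod 2) (l : ℕ) :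
    hammingNorm (shiftL v l) = hammingNorm v := by
  haveI : NeZero n := ⟨hn.ne'⟩
  unfold hammingNorm
  apply Finset.card_equiv (Equiv.addRight ((l : Fin n)))
  intro i
  simp only [Finset.mem_filter, Finset.mem_univ, true_and, Equiv.coe_addRight]
  have hi : shiftL v l i = v (i + (l : Fin n)) := by
    unfold shiftL
    congr 1
    ext
    simp only [Fin.add_def, Fin.val_natCast]
    rw [Nat.add_mod_mod]
  rw [hi]

theorem stmt8 (n : ℕ) (hn : 2 ≤ n) (C : Submodule (ZMod 2) (Fin n → ZMod 2))
    (hC : IsCyclicCode C) (m l : ℕ) (hm1 : 1 ≤ m) (hm2 : m ≤ n - 1) (hl : l < n)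
    (hmem : shiftL (tailVec n m) l ∈ C) :
    ∃ w ∈ C, hammingNorm w = 2 := by
  classical
  have hn0 : 0 < n := by omega
  set t := tailVec n m with ht
  set u : Fin n → ZMod 2 := t + shiftL t 1 with hu
  have h1 : shiftL (shiftL t l) 1 ∈ C := hC _ hmem 1
  refine ⟨shiftL t l + shiftL (shiftL t l) 1, C.add_mem hmem h1, ?_⟩
  have heq : shiftL t l + shiftL (shiftL t l) 1 = shiftL u l := by
    funext j
    simp only [Pi.add_apply, shiftL, hu]
    congr 2
    ext
    simp only
    rw [Nat.mod_add_mod, Nat.mod_add_mod]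
    congr 1
    omega
  rw [heq, norm_shiftL hn0]
  have ha : n - m - 1 < n := by omega
  have hb : n - 1 < n := by omega
  have key : ∀ j : Fin n, u j ≠ 0 ↔ (j.val = n - m - 1 ∨ j.val = n - 1) := by
    intro j
    have hj := j.isLt
    simp only [hu, Pi.add_apply, shiftL, tailVec, ht]
    rcases Nat.lt_or_ge j.val (n - 1) with h | h
    · have h2 : (j.val + 1) % n = j.val + 1 := Nat.mod_eq_of_lt (by omega)
      simp only [h2]
      split_ifs with p q q
      · simp only [ne_eq]
        constructor
        · intro hx; exact absurd (by decide : (1 + 1 : ZMod 2) = 0) hx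
        · rintro (hx | hx) <;> omega
      · exact absurd (p.trans (Nat.le_succ _)) q
      · simp only [zero_add, ne_eq, one_ne_zero, not_false_iff, true_iff]
        left; omega
      · constructor
        · intro hx; exact absurd (by decide : (0 + 0 : ZMod 2) = 0) hx
        · rintro (hx | hx) <;> omega
    · have hjn : j.val = n - 1 := by omega
      have h2 : (j.val + 1) % n = 0 := by
        rw [hjn, Nat.sub_add_cancel (by omega : 1 ≤ n)]
        exact Nat.mod_self n
      simp only [h2]
      have p1 : n - m ≤ j.val := by omega
      have p2 : ¬ (n - m ≤ 0) := by omega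
      rw [if_pos p1, if_neg p2]
      simp only [add_zero, ne_eq, one_ne_zero, not_false_iff, true_iff]
      right; exact hjn
  unfold hammingNorm
  rw [Finset.card_eq_two]
  refine ⟨⟨n - m - 1, ha⟩, ⟨n - 1, hb⟩, ?_, ?_⟩
  · simp only [ne_eq, Fin.mk.injEq]
    omega
  · ext j
    simp only [Finset.mem_filter, Finset.mem_univ, true_and, Finset.mem_insert,
      Finset.mem_singleton, key j, Fin.ext_iff]
end

section
/- Let n ≥ 1, let C be a cyclic ZMod 2-submodule of (Fin n → ZMod 2), and let p, q ∈ {0, 1, …, n−1} with p > q. Then v_p + v_q ∈ C if and only if v_{p−q} ∈ C. (This is the cyclic reduction step used in the proof of Lemma 3 of the paper: the sum v_p + v_q is the indicator of a consecutive block of p − q coordinates, hence a cyclic shift of the consecutive tail vector v_{p−q}, and membership in a cyclic code is invariant under cyclic shifts.) -/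
theorem stmt13 (n : ℕ) (hn : 1 ≤ n) (C : Submodule (ZMod 2) (Fin n → ZMod 2))
    (hC : IsCyclicCode C) (p q : ℕ) (hp : p < n) (hq : q < n) (hpq : p > q) :
    tailVec n p + tailVec n q ∈ C ↔ tailVec n (p - q) ∈ C := by
  have key : tailVec n p + tailVec n q = shiftL (tailVec n (p - q)) q := by
    funext j
    have hj := j.isLt
    simp only [Pi.add_apply, tailVec, shiftL]
    rcases Nat.lt_or_ge j.val (n - q) with h1 | h1
    · have hmod : (j.val + q) % n = j.val + q := Nat.mod_eq_of_lt (by omega)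
      simp only [hmod]
      rcases Nat.lt_or_ge j.val (n - p) with h2 | h2
      · rw [if_neg (by omega), if_neg (by omega), if_neg (by omega)]; simp
      · rw [if_pos h2, if_neg (by omega), if_pos (by omega)]; simp
    · have hmod : (j.val + q) % n = j.val + q - n := by
        rw [Nat.mod_eq_sub_mod (by omega), Nat.mod_eq_of_lt (by omega)]
      simp only [hmod]; rw [if_pos (by omega), if_pos (by omega), if_neg (by omega)]
      decide
  constructor
  · intro h
    have hmem := hC _ h (n - q)
    have comp : shiftL (tailVec n p + tailVec n q) (n - q) = tailVec n (p - q) := by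
      rw [key]
      funext j
      have hj := j.isLt
      simp only [shiftL]
      congr 1
      apply Fin.ext
      simp only []
      rw [Nat.mod_add_mod]
      have : j.val + (n - q) + q = j.val + n := by omega
      rw [this, Nat.add_mod_right, Nat.mod_eq_of_lt hj]
    rwa [comp] at hmem
  · intro h
    rw [key]
    exact hC _ h q
end

section
/- Let n be a positive natural number and let C_x and C_z be ZMod 2-submodules of (Fin n → ZMod 2) with dim C_x = k_x and dim C_z = k_z (finite ZMod 2-dimensions), and suppose C_x⊥ ⊆ C_z. Then the dimension over ZMod 2 of the quotient module C_z / C_x⊥ satisfies dim(C_z / C_x⊥) + n = k_x + k_z; equivalently, the CSS code built from C_x and C_z encodes k = k_x + k_z − n logical qubits. (This is the parameter count in the CSS code construction, Theorem 1 of the paper; it uses that dim C_x⊥ = n − k_x over ZMod 2.) -/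
open LinearMap (BilinForm)

noncomputable def dotForm (n : ℕ) : BilinForm (ZMod 2) (Fin n → ZMod 2) :=
  Matrix.toBilin' 1

lemma dotForm_apply {n : ℕ} (u w : Fin n → ZMod 2) :
    dotForm n u w = ∑ j, u j * w j := by
  simp [dotForm, Matrix.toBilin'_apply', dotProduct, Matrix.one_mulVec]

lemma dotForm_nondeg (n : ℕ) : (dotForm n).Nondegenerate := by
  rw [dotForm, Matrix.nondegenerate_toBilin'_iff]
  rw [Matrix.nondegenerate_def]
  refine ⟨?_, ?_⟩ <;> intro v hv <;> ext i <;> have := hv (Pi.single i 1) <;>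
  rw [dotProduct] at this <;>
  simpa [Matrix.one_apply, Pi.single_apply, Finset.sum_ite_eq', Finset.sum_ite_eq] using this

lemma dotForm_refl (n : ℕ) : (dotForm n).IsRefl := by
  intro u w h
  rw [dotForm_apply] at *
  rw [← h]; exact Finset.sum_congr rfl fun j _ => mul_comm _ _

set_option synthInstance.maxHeartbeats 1000000 in
theorem stmt14 (n : ℕ) (hn : 0 < n) (kx kz : ℕ)
    (Cx Cz : Submodule (ZMod 2) (Fin n → ZMod 2))
    (hkx : Module.finrank (ZMod 2) Cx = kx)
    (hkz : Module.finrank (ZMod 2) Cz = kz)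
    (hsub : dualCode Cx ≤ Cz) :
    Module.finrank (ZMod 2) (Cz ⧸ Submodule.comap Cz.subtype (dualCode Cx)) + n =
      kx + kz := by
  have heq : dualCode Cx = (dotForm n).orthogonal Cx := by
    ext u
    rw [LinearMap.BilinForm.mem_orthogonal_iff]
    constructor
    · intro h w hw
      have := h w hw
      rw [dotForm_apply, ← this]
      exact Finset.sum_congr rfl fun j _ => mul_comm _ _
    · intro h w hw
      have := h w hw
      rw [dotForm_apply] at this
      rw [← this]
      exact Finset.sum_congr rfl fun j _ => mul_comm _ _
  have hfin : Module.finrank (ZMod 2) (Fin n → ZMod 2) = n := by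
    simp [Module.finrank_pi]
  have hdS : Module.finrank (ZMod 2) (dualCode Cx) = n - kx := by
    rw [heq, LinearMap.BilinForm.finrank_orthogonal (dotForm_nondeg n), hfin, hkx]
  have hkxle : kx ≤ n := by
    have := Submodule.finrank_le Cx; rw [hkx, hfin] at this; exact this
  have hq := Submodule.finrank_quotient_add_finrank (Submodule.comap Cz.subtype (dualCode Cx))
  have hcomap : Module.finrank (ZMod 2) (Submodule.comap Cz.subtype (dualCode Cx)) =
      Module.finrank (ZMod 2) (dualCode Cx) :=
    (Submodule.comapSubtypeEquivOfLe hsub).finrank_eq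
  rw [hcomap, hdS, hkz] at hq
  omega
end
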